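/- Let Q_t be the true optimal action-value function at state s with value V(s) = max_a Q_t(s,a), and let Q_0, G satisfy |Q_0(s,a) - Q_t(s,a)| ≤ ε and |G(s,a) - Q_t(s,a)| ≤ δ for all a. If action a satisfies αQ_0(s,a) + (1-α)G(s,a) ≥ αQ_0(s,a*) + (1-α)G(s,a*) where a* maximizes Q_t(s,·) and α ∈ [0,1], then V(s) - Q_t(s,a) ≤ 2(αε + (1-α)δ). -/
import Mathlib

/-- Any action whose convex-combination score is at least that of the truly
optimal action is at most `2 (α ε + (1 - α) δ)`-suboptimal in true value. -/
theorem pamcts_action_suboptimality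
    {A : Type*} [Fintype A]
    (Qt Q0 G : A → ℝ) (ε δ α : ℝ)
    (hε0 : 0 ≤ ε) (hδ0 : 0 ≤ δ)
    (hε : ∀ a, |Q0 a - Qt a| ≤ ε)
    (hδ : ∀ a, |G a - Qt a| ≤ δ)
    (hα0 : 0 ≤ α) (hα1 : α ≤ 1)
    (astar : A) (hmax : ∀ b, Qt b ≤ Qt astar)
    (a : A)
    (ha : α * Q0 astar + (1 - α) * G astar ≤ α * Q0 a + (1 - α) * G a) :
    Qt astar - Qt a ≤ 2 * (α * ε + (1 - α) * δ) := by
  have h1 := abs_le.mp (hε a)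
  have h2 := abs_le.mp (hε astar)
  have h3 := abs_le.mp (hδ a)
  have h4 := abs_le.mp (hδ astar)
  nlinarith [h1.1, h1.2, h2.1, h2.2, h3.1, h3.2, h4.1, h4.2, mul_nonneg hα0 hε0, mul_nonneg (sub_nonneg.mpr hα1) hδ0]
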